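/- Let (X, 𝒳) be a measurable space with a σ-finite measure λ, let d ≥ 1, and let g : X^d → ℝ be square integrable with respect to λ^{⊗d}. Let λ' be the product of λ with Lebesgue measure restricted to [0,1], a measure on X × [0,1], and let Q : (X × [0,1])^d → X^d be the coordinate projection Q((x_1,t_1),…,(x_d,t_d)) = (x_1,…,x_d). Then { ∫_{X^d} g(x) · ∏_{k=1}^d φ(x_k) dλ^{⊗d}(x) : φ : X → ℝ measurable, ∫_X φ^2 dλ ≤ 1 } = { ∫_{(X×[0,1])^d} g(Q(z)) · ∏_{k=1}^d ψ(z_k) d(λ')^{⊗d}(z) : ψ : X × [0,1] → ℝ measurable, ∫_{X×[0,1]} ψ^2 dλ' ≤ 1 }, as subsets of ℝ. -/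

import Mathlib

open MeasureTheory ENNReal

section Helpers

variable {α : Type*} [MeasurableSpace α] {m : Measure α}

lemma my_ofReal_sq (a : ℝ) : ENNReal.ofReal (a ^ 2) = (‖a‖₊ : ℝ≥0∞) ^ 2 := by
  rw [← Real.enorm_eq_ofReal (sq_nonneg a), enorm_pow, enorm_eq_nnnorm]

lemma my_eLpNorm_two_sq (f : α → ℝ) :
    (eLpNorm f 2 m) ^ 2 = ∫⁻ x, (‖f x‖₊ : ℝ≥0∞) ^ 2 ∂m := by
  rw [eLpNorm_eq_lintegral_rpow_enorm_toReal two_ne_zero ENNReal.ofNat_ne_top]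
  have h2 : ((2 : ℝ≥0∞)).toReal = (2 : ℝ) := by simp
  rw [h2, ← ENNReal.rpow_natCast _ 2, ← ENNReal.rpow_mul]
  norm_num
  simp only [enorm_eq_nnnorm]

lemma my_eLpNorm_two_le_one {f : α → ℝ}
    (h : ∫⁻ x, ENNReal.ofReal (f x ^ 2) ∂m ≤ 1) : eLpNorm f 2 m ≤ 1 := by
  have h2 : (eLpNorm f 2 m) ^ 2 ≤ 1 := by
    rw [my_eLpNorm_two_sq]
    simpa [my_ofReal_sq] using h
  by_contra hc
  push_neg at hc
  exact absurd h2 (not_le.mpr (one_lt_pow₀ hc two_ne_zero))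

lemma my_memL2 {f : α → ℝ} (hf : Measurable f)
    (h : ∫⁻ x, ENNReal.ofReal (f x ^ 2) ∂m ≤ 1) : MemLp f 2 m :=
  ⟨hf.aestronglyMeasurable, lt_of_le_of_lt (my_eLpNorm_two_le_one h) one_lt_top⟩

lemma my_integrable_mul {f g : α → ℝ} (hf : MemLp f 2 m) (hg : MemLp g 2 m) :
    Integrable (fun x => f x * g x) m := by
  refine Integrable.mono' ((hf.integrable_sq.add hg.integrable_sq).div_const 2)
    (hf.aestronglyMeasurable.mul hg.aestronglyMeasurable)
    (Filter.Eventually.of_forall fun x => ?_)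
  have h1 : ‖f x * g x‖ = |f x| * |g x| := by rw [Real.norm_eq_abs, abs_mul]
  rw [h1]
  have h2 := sq_nonneg (|f x| - |g x|)
  have h3 : |f x| ^ 2 = f x ^ 2 := sq_abs _
  have h4 : |g x| ^ 2 = g x ^ 2 := sq_abs _
  simp only [Pi.div_apply, Pi.add_apply]
  nlinarith [abs_nonneg (f x), abs_nonneg (g x)]

lemma my_sq_nnnorm_integral_le [IsProbabilityMeasure m] {f : α → ℝ}
    (hf : AEStronglyMeasurable f m) :
    (‖∫ x, f x ∂m‖₊ : ℝ≥0∞) ^ 2 ≤ ∫⁻ x, (‖f x‖₊ : ℝ≥0∞) ^ 2 ∂m := by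
  have h1 : (‖∫ x, f x ∂m‖₊ : ℝ≥0∞) ≤ eLpNorm f 2 m := by
    refine le_trans ?_ (eLpNorm_le_eLpNorm_of_exponent_le one_le_two hf)
    rw [eLpNorm_one_eq_lintegral_enorm]
    exact enorm_integral_le_lintegral_enorm f
  calc (‖∫ x, f x ∂m‖₊ : ℝ≥0∞) ^ 2 ≤ (eLpNorm f 2 m) ^ 2 := pow_le_pow_left' h1 2
    _ = _ := my_eLpNorm_two_sq f

lemma my_lintegral_pi_prod (m : Measure α) [SigmaFinite m] :
    ∀ {n : ℕ} (f : Fin n → α → ℝ≥0∞), (∀ i, Measurable (f i)) →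
      ∫⁻ x : Fin n → α, ∏ i, f i (x i) ∂(Measure.pi fun _ => m) = ∏ i, ∫⁻ t, f i t ∂m := by
  intro n
  induction n with
  | zero =>
      intro f _
      simp [Measure.pi_empty_univ]
  | succ n ih =>
      intro f hf
      have h := (measurePreserving_piFinSuccAbove (fun _ : Fin (n + 1) => m) 0)
      calc ∫⁻ x : Fin (n + 1) → α, ∏ i, f i (x i) ∂(Measure.pi fun _ => m)
          = ∫⁻ p : α × (Fin n → α), f 0 p.1 * ∏ j, f j.succ (p.2 j)
              ∂(m.prod (Measure.pi fun _ => m)) := by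
            rw [← h.lintegral_comp_emb
              (MeasurableEquiv.piFinSuccAbove (fun _ : Fin (n + 1) => α) 0).measurableEmbedding
              (fun p => f 0 p.1 * ∏ j, f j.succ (p.2 j))]
            refine lintegral_congr fun x => ?_
            simp [MeasurableEquiv.piFinSuccAbove_apply, Fin.prod_univ_succ,
              Fin.zero_succAbove, Fin.tail]
        _ = (∫⁻ t, f 0 t ∂m) * ∏ j : Fin n, ∫⁻ t, f j.succ t ∂m := by
            rw [show (∫⁻ p : α × (Fin n → α), f 0 p.1 * ∏ j : Fin n, f j.succ (p.2 j)
                ∂(m.prod (Measure.pi fun _ : Fin n => m))) =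
                (∫⁻ t, f 0 t ∂m) * ∫⁻ t : Fin n → α, ∏ j : Fin n, f j.succ (t j)
                  ∂(Measure.pi fun _ : Fin n => m)
              from lintegral_prod_mul (hf 0).aemeasurable
                (Finset.measurable_prod Finset.univ fun (j : Fin n) _ =>
                  (hf j.succ).comp (measurable_pi_apply j)).aemeasurable]
            rw [ih (fun j => f j.succ) (fun j => hf j.succ)]
        _ = _ := by rw [Fin.prod_univ_succ]

lemma my_integral_pi_prod (m : Measure α) [SigmaFinite m] :
    ∀ {n : ℕ} (f : Fin n → α → ℝ),
      ∫ x : Fin n → α, ∏ i, f i (x i) ∂(Measure.pi fun _ => m) = ∏ i, ∫ t, f i t ∂m := by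
  intro n
  induction n with
  | zero =>
      intro f
      simp [Measure.pi_empty_univ, Measure.real]
  | succ n ih =>
      intro f
      have h := (measurePreserving_piFinSuccAbove (fun _ : Fin (n + 1) => m) 0)
      calc ∫ x : Fin (n + 1) → α, ∏ i, f i (x i) ∂(Measure.pi fun _ => m)
          = ∫ p : α × (Fin n → α), f 0 p.1 * ∏ j, f j.succ (p.2 j)
              ∂(m.prod (Measure.pi fun _ => m)) := by
            rw [← h.integral_comp' (fun p => f 0 p.1 * ∏ j, f j.succ (p.2 j))]
            refine integral_congr_ae (Filter.Eventually.of_forall fun x => ?_)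
            simp [MeasurableEquiv.piFinSuccAbove_apply, Fin.prod_univ_succ,
              Fin.zero_succAbove, Fin.tail]
        _ = (∫ t, f 0 t ∂m) * ∏ j : Fin n, ∫ t, f j.succ t ∂m := by
            rw [show (∫ p : α × (Fin n → α), f 0 p.1 * ∏ j, f j.succ (p.2 j)
                ∂(m.prod (Measure.pi fun _ : Fin n => m))) =
                (∫ t, f 0 t ∂m) * ∫ t : Fin n → α, ∏ j : Fin n, f j.succ (t j)
                  ∂(Measure.pi fun _ : Fin n => m)
              from integral_prod_mul (f 0) (fun t : Fin n → α => ∏ j : Fin n, f j.succ (t j)),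
              ih (fun j => f j.succ)]
        _ = _ := by rw [Fin.prod_univ_succ]

end Helpers

/-- Invariance of the set `K_g` under the marking `X × [0,1]` of the state space:
with `λ' = λ ⊗ (Lebesgue restricted to [0,1])` and `Q` the coordinate projection,
`{ ∫ g·φ^{⊗d} dλ^{⊗d} : ‖φ‖_{L_2(λ)} ≤ 1 } = { ∫ (g∘Q)·ψ^{⊗d} d(λ')^{⊗d} : ‖ψ‖_{L_2(λ')} ≤ 1 }`. -/
theorem stmt_15 {X : Type*} [MeasurableSpace X] (μ : Measure X) [SigmaFinite μ]
    (d : ℕ) (hd : 1 ≤ d) (g : (Fin d → X) → ℝ)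
    (hg : MemLp g 2 (Measure.pi fun _ : Fin d => μ)) :
    {c : ℝ | ∃ φ : X → ℝ, Measurable φ ∧
      (∫⁻ x, ENNReal.ofReal (φ x ^ 2) ∂μ) ≤ 1 ∧
      c = ∫ x : Fin d → X, g x * ∏ k : Fin d, φ (x k)
            ∂(Measure.pi fun _ : Fin d => μ)} =
    {c : ℝ | ∃ ψ : X × ℝ → ℝ, Measurable ψ ∧
      (∫⁻ z, ENNReal.ofReal (ψ z ^ 2)
          ∂(μ.prod ((volume : Measure ℝ).restrict (Set.Icc 0 1)))) ≤ 1 ∧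
      c = ∫ z : Fin d → X × ℝ, g (fun i => (z i).1) * ∏ k : Fin d, ψ (z k)
            ∂(Measure.pi fun _ : Fin d =>
                μ.prod ((volume : Measure ℝ).restrict (Set.Icc 0 1)))} := by
  set ν : Measure ℝ := (volume : Measure ℝ).restrict (Set.Icc 0 1) with hν
  haveI : IsProbabilityMeasure ν := ⟨by
    rw [hν, Measure.restrict_apply_univ, Real.volume_Icc]
    norm_num⟩
  -- the projection map and its measure-preserving property
  have hfst : MeasurePreserving (Prod.fst : X × ℝ → X) (μ.prod ν) μ :=
    ⟨measurable_fst, by rw [Measure.map_fst_prod, measure_univ, one_smul]⟩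
  have hT : MeasurePreserving (fun (z : Fin d → X × ℝ) (i : Fin d) => (z i).1)
      (Measure.pi fun _ : Fin d => μ.prod ν) (Measure.pi fun _ : Fin d => μ) :=
    measurePreserving_pi _ _ (fun _ => hfst)
  ext c
  simp only [Set.mem_setOf_eq]
  constructor
  · rintro ⟨φ, hφm, hφ2, rfl⟩
    refine ⟨fun z => φ z.1, hφm.comp measurable_fst, ?_, ?_⟩
    · have hmeas : Measurable fun z : X × ℝ => ENNReal.ofReal (φ z.1 ^ 2) :=
        ENNReal.measurable_ofReal.comp ((hφm.comp measurable_fst).pow_const 2)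
      rw [lintegral_prod _ hmeas.aemeasurable]
      simpa [lintegral_const, measure_univ, mul_one] using hφ2
    · have hsm : AEStronglyMeasurable (fun x : Fin d → X => g x * ∏ k, φ (x k))
          (Measure.pi fun _ : Fin d => μ) :=
        hg.aestronglyMeasurable.mul
          (Finset.measurable_prod Finset.univ fun k _ =>
            hφm.comp (measurable_pi_apply k)).aestronglyMeasurable
      have hsm' : AEStronglyMeasurable (fun x : Fin d → X => g x * ∏ k, φ (x k))
          (Measure.map (fun (z : Fin d → X × ℝ) (i : Fin d) => (z i).1)
            (Measure.pi fun _ : Fin d => μ.prod ν)) := hT.map_eq.symm ▸ hsm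
      have h := integral_map hT.aemeasurable hsm'
      rw [hT.map_eq] at h
      exact h
  · rintro ⟨ψ, hψm, hψ2, rfl⟩
    set φ : X → ℝ := fun x => ∫ t, ψ (x, t) ∂ν with hφ
    have hφm : Measurable φ :=
      (hψm.stronglyMeasurable.integral_prod_right').measurable
    have hψmem : MemLp ψ 2 (μ.prod ν) := my_memL2 hψm hψ2
    refine ⟨φ, hφm, ?_, ?_⟩
    · -- L² bound for φ
      have hmeas : Measurable fun z : X × ℝ => ENNReal.ofReal (ψ z ^ 2) :=
        ENNReal.measurable_ofReal.comp (hψm.pow_const 2)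
      have key : ∫⁻ x, ENNReal.ofReal (φ x ^ 2) ∂μ ≤
          ∫⁻ z, ENNReal.ofReal (ψ z ^ 2) ∂(μ.prod ν) := by
        rw [lintegral_prod _ hmeas.aemeasurable]
        refine lintegral_mono fun x => ?_
        rw [my_ofReal_sq]
        have := my_sq_nnnorm_integral_le (m := ν) (f := fun t => ψ (x, t))
          (hψm.comp (measurable_prodMk_left)).aestronglyMeasurable
        refine this.trans (le_of_eq ?_)
        refine lintegral_congr fun t => ?_
        rw [my_ofReal_sq]
      exact key.trans hψ2
    · -- equality of the integrals
      set Pd : Measure (Fin d → X × ℝ) := Measure.pi fun _ : Fin d => μ.prod ν with hPd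
      have hgT : MemLp (fun z : Fin d → X × ℝ => g (fun i => (z i).1)) 2 Pd :=
        hg.comp_measurePreserving hT
      have hHm : Measurable fun z : Fin d → X × ℝ => ∏ k, ψ (z k) :=
        Finset.measurable_prod Finset.univ fun k _ => hψm.comp (measurable_pi_apply k)
      have hH2 : MemLp (fun z : Fin d → X × ℝ => ∏ k, ψ (z k)) 2 Pd := by
        refine my_memL2 hHm ?_
        have heq : ∀ z : Fin d → X × ℝ, ENNReal.ofReal ((∏ k, ψ (z k)) ^ 2) =
            ∏ k, ENNReal.ofReal (ψ (z k) ^ 2) := by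
          intro z
          rw [← Finset.prod_pow, ENNReal.ofReal_prod_of_nonneg (fun k _ => sq_nonneg _)]
        simp_rw [heq]
        rw [my_lintegral_pi_prod (μ.prod ν)
          (fun _ w => ENNReal.ofReal (ψ w ^ 2))
          (fun _ => ENNReal.measurable_ofReal.comp (hψm.pow_const 2))]
        exact Finset.prod_le_one (fun _ _ => zero_le) (fun _ _ => hψ2)
      have hFint : Integrable
          (fun z : Fin d → X × ℝ => g (fun i => (z i).1) * ∏ k, ψ (z k)) Pd :=
        my_integrable_mul hgT hH2
      -- move to the product of pi measures
      set e := MeasurableEquiv.arrowProdEquivProdArrow X ℝ (Fin d) with he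
      have hep : MeasurePreserving e Pd
          ((Measure.pi fun _ : Fin d => μ).prod (Measure.pi fun _ : Fin d => ν)) :=
        measurePreserving_arrowProdEquivProdArrow X ℝ (Fin d)
          (fun _ => μ) (fun _ => ν)
      have hsymm : ∀ p : (Fin d → X) × (Fin d → ℝ), e.symm p = fun i => (p.1 i, p.2 i) := by
        intro p
        rfl
      have hInt' : Integrable
          (fun p : (Fin d → X) × (Fin d → ℝ) => g p.1 * ∏ k, ψ (p.1 k, p.2 k))
          ((Measure.pi fun _ : Fin d => μ).prod (Measure.pi fun _ : Fin d => ν)) := by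
        have := ((hep.symm e).integrable_comp_emb e.symm.measurableEmbedding
          (g := fun z : Fin d → X × ℝ => g (fun i => (z i).1) * ∏ k, ψ (z k))).mpr hFint
        exact this
      calc ∫ z : Fin d → X × ℝ, g (fun i => (z i).1) * ∏ k, ψ (z k) ∂Pd
          = ∫ p : (Fin d → X) × (Fin d → ℝ), g p.1 * ∏ k, ψ (p.1 k, p.2 k)
              ∂((Measure.pi fun _ : Fin d => μ).prod (Measure.pi fun _ : Fin d => ν)) := by
            rw [← (hep.symm e).integral_comp'
              (fun z : Fin d → X × ℝ => g (fun i => (z i).1) * ∏ k, ψ (z k))]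
            rfl
        _ = ∫ x : Fin d → X, ∫ t : Fin d → ℝ, g x * ∏ k, ψ (x k, t k)
              ∂(Measure.pi fun _ : Fin d => ν) ∂(Measure.pi fun _ : Fin d => μ) :=
            integral_prod _ hInt'
        _ = ∫ x : Fin d → X, g x * ∏ k, φ (x k) ∂(Measure.pi fun _ : Fin d => μ) := by
            refine integral_congr_ae (Filter.Eventually.of_forall fun x => ?_)
            show (∫ t : Fin d → ℝ, g x * ∏ k, ψ (x k, t k)
                ∂(Measure.pi fun _ : Fin d => ν)) = g x * ∏ k, φ (x k)
            rw [integral_const_mul]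
            congr 1
            exact my_integral_pi_prod ν (fun k s => ψ (x k, s))
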